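/- There do not exist odd integers d₁ ≥ d₂ ≥ d₃ ≥ d₄ ≥ d₅ ≥ d₆ ≥ d₇, each strictly greater than 1, such that dᵢ² divides N := 1 + 2(d₁² + d₂² + d₃² + d₄² + d₅² + d₆² + d₇²) for every i = 1, …, 7. -/

import Mathlib

instance : Fact (Nat.Prime 7) := ⟨by norm_num⟩

lemma key_nat (m a b : ℕ) (hm : ¬ 7 ∣ m) (hb : b ≠ 0) : 7 * a^2 ≠ m * b^2 := by
  intro h
  have ha : a ≠ 0 := by
    rintro rfl
    have hm0 : m ≠ 0 := by rintro rfl; exact hm ⟨0, rfl⟩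
    simp at h
    omega
  have h1 : padicValNat 7 (7 * a^2) = 1 + 2 * padicValNat 7 a := by
    rw [padicValNat.mul (by norm_num) (by positivity), padicValNat.pow a 2,
      padicValNat.self (by norm_num)]
  have h2 : padicValNat 7 (m * b^2) = 2 * padicValNat 7 b := by
    rw [padicValNat.mul (by rintro rfl; exact hm ⟨0, rfl⟩) (by positivity),
      padicValNat.eq_zero_of_not_dvd hm, padicValNat.pow b 2, zero_add]
  rw [h] at h1
  omega

lemma key_int (m a b : ℤ) (hm : ¬ (7:ℤ) ∣ m) (hb : b ≠ 0) : 7 * a^2 ≠ m * b^2 := by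
  intro h
  apply key_nat m.natAbs a.natAbs b.natAbs
  · intro hd
    exact hm (Int.natAbs_dvd_natAbs.mp (by simpa using hd))
  · simpa using hb
  · have := congrArg Int.natAbs h
    simpa [Int.natAbs_mul, Int.natAbs_pow] using this

lemma sq_mod8 {d : ℤ} (h : Odd d) : 8 ∣ d^2 - 1 := by
  obtain ⟨t, rfl⟩ := h
  obtain ⟨u, hu⟩ := Int.even_mul_succ_self t
  exact ⟨u, by linear_combination 4 * hu⟩

lemma sq_mono {a b : ℤ} (h0 : 0 ≤ a) (h : a ≤ b) : a ^ 2 ≤ b ^ 2 := by nlinarith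

theorem no_rank15_perfect_dims (d₁ d₂ d₃ d₄ d₅ d₆ d₇ : ℤ) :
    ¬ (Odd d₁ ∧ Odd d₂ ∧ Odd d₃ ∧ Odd d₄ ∧ Odd d₅ ∧ Odd d₆ ∧ Odd d₇ ∧
       d₁ ≥ d₂ ∧ d₂ ≥ d₃ ∧ d₃ ≥ d₄ ∧ d₄ ≥ d₅ ∧ d₅ ≥ d₆ ∧ d₆ ≥ d₇ ∧
       1 < d₁ ∧ 1 < d₂ ∧ 1 < d₃ ∧ 1 < d₄ ∧ 1 < d₅ ∧ 1 < d₆ ∧ 1 < d₇ ∧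
       d₁ ^ 2 ∣ 1 + 2 * (d₁ ^ 2 + d₂ ^ 2 + d₃ ^ 2 + d₄ ^ 2 + d₅ ^ 2 + d₆ ^ 2 + d₇ ^ 2) ∧
       d₂ ^ 2 ∣ 1 + 2 * (d₁ ^ 2 + d₂ ^ 2 + d₃ ^ 2 + d₄ ^ 2 + d₅ ^ 2 + d₆ ^ 2 + d₇ ^ 2) ∧
       d₃ ^ 2 ∣ 1 + 2 * (d₁ ^ 2 + d₂ ^ 2 + d₃ ^ 2 + d₄ ^ 2 + d₅ ^ 2 + d₆ ^ 2 + d₇ ^ 2) ∧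
       d₄ ^ 2 ∣ 1 + 2 * (d₁ ^ 2 + d₂ ^ 2 + d₃ ^ 2 + d₄ ^ 2 + d₅ ^ 2 + d₆ ^ 2 + d₇ ^ 2) ∧
       d₅ ^ 2 ∣ 1 + 2 * (d₁ ^ 2 + d₂ ^ 2 + d₃ ^ 2 + d₄ ^ 2 + d₅ ^ 2 + d₆ ^ 2 + d₇ ^ 2) ∧
       d₆ ^ 2 ∣ 1 + 2 * (d₁ ^ 2 + d₂ ^ 2 + d₃ ^ 2 + d₄ ^ 2 + d₅ ^ 2 + d₆ ^ 2 + d₇ ^ 2) ∧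
       d₇ ^ 2 ∣ 1 + 2 * (d₁ ^ 2 + d₂ ^ 2 + d₃ ^ 2 + d₄ ^ 2 + d₅ ^ 2 + d₆ ^ 2 + d₇ ^ 2)) := by
  rintro ⟨o1, o2, o3, o4, o5, o6, o7, h12, h23, h34, h45, h56, h67,
    g1, g2, g3, g4, g5, g6, g7, v1, v2, v3, v4, v5, v6, v7⟩
  obtain ⟨N, hN⟩ : ∃ N : ℤ,
      N = 1 + 2 * (d₁ ^ 2 + d₂ ^ 2 + d₃ ^ 2 + d₄ ^ 2 + d₅ ^ 2 + d₆ ^ 2 + d₇ ^ 2) := ⟨_, rfl⟩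
  rw [← hN] at v1 v2 v3 v4
  -- each dᵢ ≥ 3
  have e1 : 3 ≤ d₁ := by rcases o1 with ⟨t, ht⟩; omega
  have e2 : 3 ≤ d₂ := by rcases o2 with ⟨t, ht⟩; omega
  have e3 : 3 ≤ d₃ := by rcases o3 with ⟨t, ht⟩; omega
  have e4 : 3 ≤ d₄ := by rcases o4 with ⟨t, ht⟩; omega
  have e5 : 3 ≤ d₅ := by rcases o5 with ⟨t, ht⟩; omega
  have e6 : 3 ≤ d₆ := by rcases o6 with ⟨t, ht⟩; omega
  have e7 : 3 ≤ d₇ := by rcases o7 with ⟨t, ht⟩; omega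
  have s1 : 9 ≤ d₁ ^ 2 := by have := sq_mono (by norm_num : (0:ℤ) ≤ 3) e1; linarith
  have s2 : 9 ≤ d₂ ^ 2 := by have := sq_mono (by norm_num : (0:ℤ) ≤ 3) e2; linarith
  have s3 : 9 ≤ d₃ ^ 2 := by have := sq_mono (by norm_num : (0:ℤ) ≤ 3) e3; linarith
  have s4 : 9 ≤ d₄ ^ 2 := by have := sq_mono (by norm_num : (0:ℤ) ≤ 3) e4; linarith
  have s5 : 9 ≤ d₅ ^ 2 := by have := sq_mono (by norm_num : (0:ℤ) ≤ 3) e5; linarith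
  have s6 : 9 ≤ d₆ ^ 2 := by have := sq_mono (by norm_num : (0:ℤ) ≤ 3) e6; linarith
  have s7 : 9 ≤ d₇ ^ 2 := by have := sq_mono (by norm_num : (0:ℤ) ≤ 3) e7; linarith
  have q12 : d₂ ^ 2 ≤ d₁ ^ 2 := sq_mono (by linarith) h12
  have q23 : d₃ ^ 2 ≤ d₂ ^ 2 := sq_mono (by linarith) h23
  have q34 : d₄ ^ 2 ≤ d₃ ^ 2 := sq_mono (by linarith) h34
  have q45 : d₅ ^ 2 ≤ d₄ ^ 2 := sq_mono (by linarith) h45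
  have q56 : d₆ ^ 2 ≤ d₅ ^ 2 := sq_mono (by linarith) h56
  have q67 : d₇ ^ 2 ≤ d₆ ^ 2 := sq_mono (by linarith) h67
  -- N ≡ 7 (mod 8)
  obtain ⟨b1, hb1⟩ := sq_mod8 o1
  obtain ⟨b2, hb2⟩ := sq_mod8 o2
  obtain ⟨b3, hb3⟩ := sq_mod8 o3
  obtain ⟨b4, hb4⟩ := sq_mod8 o4
  obtain ⟨b5, hb5⟩ := sq_mod8 o5
  obtain ⟨b6, hb6⟩ := sq_mod8 o6
  obtain ⟨b7, hb7⟩ := sq_mod8 o7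
  have hN7 : N - 7 = 8 * (2 * (b1 + b2 + b3 + b4 + b5 + b6 + b7) + 1) := by
    rw [hN]; linarith
  have hNub : N ≤ 1 + 14 * d₁ ^ 2 := by rw [hN]; linarith
  have hNlb : 1 + 2 * d₁ ^ 2 ≤ N := by rw [hN]; linarith
  -- Step 1 : N = 7 * d₁²
  obtain ⟨k1, hk1⟩ := v1
  have hk1lb : 3 ≤ k1 := by
    by_contra h
    push_neg at h
    have h' := mul_le_mul_of_nonneg_left (show k1 ≤ 2 by omega)
      (show (0:ℤ) ≤ d₁ ^ 2 by positivity)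
    linarith
  have hk1ub : k1 ≤ 14 := by
    by_contra h
    push_neg at h
    have h' := mul_le_mul_of_nonneg_left (show 15 ≤ k1 by omega)
      (show (0:ℤ) ≤ d₁ ^ 2 by positivity)
    linarith
  have hmod1 : N - k1 = 8 * (k1 * b1) := by
    rw [hk1]; linear_combination k1 * hb1
  have hk17 : k1 = 7 := by omega
  rw [hk17] at hk1
  -- hk1 : N = d₁ ^ 2 * 7
  -- 5 * d₁² = 1 + 2 * (d₂² + ... + d₇²)
  have key5 : 5 * d₁ ^ 2 = 1 + 2 * (d₂ ^ 2 + d₃ ^ 2 + d₄ ^ 2 + d₅ ^ 2 + d₆ ^ 2 + d₇ ^ 2) := by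
    rw [hk1] at hN; linarith
  -- Step 2 : d₂² = d₁²
  obtain ⟨k2, hk2⟩ := v2
  have hk2lb : 3 ≤ k2 := by
    by_contra h
    push_neg at h
    have h' := mul_le_mul_of_nonneg_left (show k2 ≤ 2 by omega)
      (show (0:ℤ) ≤ d₂ ^ 2 by positivity)
    linarith
  have hk2ub : k2 ≤ 16 := by
    by_contra h
    push_neg at h
    have h' := mul_le_mul_of_nonneg_left (show 17 ≤ k2 by omega)
      (show (0:ℤ) ≤ d₂ ^ 2 by positivity)
    -- 5*N = 35*d₁² = 7*(1 + 2*(d₂²+...+d₇²)) ≤ 7 + 84*d₂², while N ≥ 17 d₂²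
    linarith
  have hmod2 : N - k2 = 8 * (k2 * b2) := by
    rw [hk2]; linear_combination k2 * hb2
  have hk2c : k2 = 7 ∨ k2 = 15 := by omega
  have hd2 : d₂ ^ 2 = d₁ ^ 2 := by
    rcases hk2c with h | h
    · rw [h] at hk2; linarith
    · rw [h] at hk2
      exact absurd (by linarith : 7 * d₁ ^ 2 = 15 * d₂ ^ 2)
        (key_int 15 d₁ d₂ (by decide) (by positivity))
  have key3 : 3 * d₁ ^ 2 = 1 + 2 * (d₃ ^ 2 + d₄ ^ 2 + d₅ ^ 2 + d₆ ^ 2 + d₇ ^ 2) := by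
    linarith
  -- Step 3 : d₃² = d₁²
  obtain ⟨k3, hk3⟩ := v3
  have hk3lb : 3 ≤ k3 := by
    by_contra h
    push_neg at h
    have h' := mul_le_mul_of_nonneg_left (show k3 ≤ 2 by omega)
      (show (0:ℤ) ≤ d₃ ^ 2 by positivity)
    linarith
  have hk3ub : k3 ≤ 23 := by
    by_contra h
    push_neg at h
    have h' := mul_le_mul_of_nonneg_left (show 24 ≤ k3 by omega)
      (show (0:ℤ) ≤ d₃ ^ 2 by positivity)
    -- 3*N = 21*d₁² = 7*(1 + 2*(d₃²+...+d₇²)) ≤ 7 + 70*d₃², while N ≥ 24 d₃²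
    linarith
  have hmod3 : N - k3 = 8 * (k3 * b3) := by
    rw [hk3]; linear_combination k3 * hb3
  have hk3c : k3 = 7 ∨ k3 = 15 ∨ k3 = 23 := by omega
  have hd3 : d₃ ^ 2 = d₁ ^ 2 := by
    rcases hk3c with h | h | h
    · rw [h] at hk3; linarith
    · rw [h] at hk3
      exact absurd (by linarith : 7 * d₁ ^ 2 = 15 * d₃ ^ 2)
        (key_int 15 d₁ d₃ (by decide) (by positivity))
    · rw [h] at hk3
      exact absurd (by linarith : 7 * d₁ ^ 2 = 23 * d₃ ^ 2)
        (key_int 23 d₁ d₃ (by decide) (by positivity))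
  have key1 : d₁ ^ 2 = 1 + 2 * (d₄ ^ 2 + d₅ ^ 2 + d₆ ^ 2 + d₇ ^ 2) := by
    linarith
  -- Step 4 : contradiction
  obtain ⟨k4, hk4⟩ := v4
  have hk4lb : 3 ≤ k4 := by
    by_contra h
    push_neg at h
    have h' := mul_le_mul_of_nonneg_left (show k4 ≤ 2 by omega)
      (show (0:ℤ) ≤ d₄ ^ 2 by positivity)
    linarith
  have hk4ub : k4 ≤ 56 := by
    by_contra h
    push_neg at h
    have h' := mul_le_mul_of_nonneg_left (show 57 ≤ k4 by omega)
      (show (0:ℤ) ≤ d₄ ^ 2 by positivity)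
    -- N = 7*d₁² = 7*(1 + 2*(d₄²+...+d₇²)) ≤ 7 + 56*d₄², while N ≥ 57 d₄²
    linarith
  have hmod4 : N - k4 = 8 * (k4 * b4) := by
    rw [hk4]; linear_combination k4 * hb4
  have hk4c : k4 = 7 ∨ k4 = 15 ∨ k4 = 23 ∨ k4 = 31 ∨ k4 = 39 ∨ k4 = 47 ∨ k4 = 55 := by
    omega
  rcases hk4c with h | h | h | h | h | h | h
  · rw [h] at hk4
    have hd4 : d₄ ^ 2 = d₁ ^ 2 := by linarith
    linarith
  · rw [h] at hk4
    exact absurd (by linarith : 7 * d₁ ^ 2 = 15 * d₄ ^ 2)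
      (key_int 15 d₁ d₄ (by decide) (by positivity))
  · rw [h] at hk4
    exact absurd (by linarith : 7 * d₁ ^ 2 = 23 * d₄ ^ 2)
      (key_int 23 d₁ d₄ (by decide) (by positivity))
  · rw [h] at hk4
    exact absurd (by linarith : 7 * d₁ ^ 2 = 31 * d₄ ^ 2)
      (key_int 31 d₁ d₄ (by decide) (by positivity))
  · rw [h] at hk4
    exact absurd (by linarith : 7 * d₁ ^ 2 = 39 * d₄ ^ 2)
      (key_int 39 d₁ d₄ (by decide) (by positivity))
  · rw [h] at hk4
    exact absurd (by linarith : 7 * d₁ ^ 2 = 47 * d₄ ^ 2)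
      (key_int 47 d₁ d₄ (by decide) (by positivity))
  · rw [h] at hk4
    exact absurd (by linarith : 7 * d₁ ^ 2 = 55 * d₄ ^ 2)
      (key_int 55 d₁ d₄ (by decide) (by positivity))
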